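/- Let λ > 0 and let ξ ∈ ℂ with −π/h < Re ξ ≤ π/h be such that the sequence w_j = e^{i j ξ h} satisfies (L_p w)_j = −λ w_j for all j ∈ ℤ, and assume 2 + i(σ_m/ω)(1 − e^{iξh}) ≠ 0 for all m ≥ 0. Define W : ℤ² → ℂ by W_{j,k} = (Π_{m=0}^{k−1} ρ(σ_m, ξ, ω)) e^{i(j+k)ξh} for k ≥ 0 (empty product equal to 1 for k = 0) and W_{j,k} = e^{i(j+k)ξh} for k < 0. Then: (i) W is discrete holomorphic with respect to Z; (ii) W_{j,0} = w_j for all j ∈ ℤ; and (iii) for every k ∈ ℤ the column W_{·,k} satisfies (L_p W_{·,k})_j = −λ W_{j,k} for all j ∈ ℤ. -/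
import Mathlib


/-- The discrete complex stretching grid
`Z_{j,k} = (j+k)h + i(h/ω) Σ_{ℓ=0}^{k-1} σ_ℓ` (the sum being 0 for `k ≤ 0`). -/
noncomputable def Zmap (h ω : ℝ) (σ : ℤ → ℝ) (j k : ℤ) : ℂ :=
  ((j + k : ℤ) : ℂ) * (h : ℂ) +
    Complex.I * ((h : ℂ) / (ω : ℂ)) * ∑ l ∈ Finset.range k.toNat, ((σ l : ℝ) : ℂ)

/-- Discrete holomorphicity with respect to the grid `Zmap h ω σ`: the discrete
Cauchy–Riemann equations hold on every face. -/
def DiscreteHolo (h ω : ℝ) (σ : ℤ → ℝ) (F : ℤ → ℤ → ℂ) : Prop :=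
  ∀ j k : ℤ,
    (F (j + 1) (k + 1) - F j k) * (Zmap h ω σ j (k + 1) - Zmap h ω σ (j + 1) k) =
    (F j (k + 1) - F (j + 1) k) * (Zmap h ω σ (j + 1) (k + 1) - Zmap h ω σ j k)

/-- The attenuation factor
`ρ(σ, ξ, ω) = (2 + i(σ/ω)(1 − e^{−iξh})) / (2 + i(σ/ω)(1 − e^{iξh}))`. -/
noncomputable def rho (σ : ℝ) (ξ : ℂ) (ω h : ℝ) : ℂ :=
  (2 + Complex.I * ((σ : ℂ) / (ω : ℂ)) * (1 - Complex.exp (-(Complex.I * ξ * (h : ℂ))))) /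
  (2 + Complex.I * ((σ : ℂ) / (ω : ℂ)) * (1 - Complex.exp (Complex.I * ξ * (h : ℂ))))

/-- The discrete-holomorphic extension `W` of the mode `w_j = e^{i j ξ h}`:
`W_{j,k} = (Π_{m=0}^{k−1} ρ(σ_m, ξ, ω)) e^{i(j+k)ξh}` for `k ≥ 0`, and
`W_{j,k} = e^{i(j+k)ξh}` for `k < 0`. -/
noncomputable def Wext (h ω : ℝ) (σ : ℤ → ℝ) (ξ : ℂ) (j k : ℤ) : ℂ :=
  if 0 ≤ k then
    (∏ m ∈ Finset.range k.toNat, rho (σ m) ξ ω h) *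
      Complex.exp (Complex.I * ((j + k : ℤ) : ℂ) * ξ * (h : ℂ))
  else
    Complex.exp (Complex.I * ((j + k : ℤ) : ℂ) * ξ * (h : ℂ))

lemma Wext_eq (h ω : ℝ) (σ : ℤ → ℝ) (ξ : ℂ) (j k : ℤ) :
    Wext h ω σ ξ j k = (∏ m ∈ Finset.range k.toNat, rho (σ m) ξ ω h) *
      Complex.exp (Complex.I * ((j + k : ℤ) : ℂ) * ξ * (h : ℂ)) := by
  unfold Wext
  split
  · rfl
  · rename_i hk
    rw [Int.toNat_of_nonpos (le_of_lt (lt_of_not_ge hk))]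
    simp

lemma cr_alg (w hh s q qi P e : ℂ) (hw : w ≠ 0) (hqi : q * qi = 1)
    (hD : 2 + Complex.I * (s / w) * (1 - q) ≠ 0) :
    (P * ((2 + Complex.I * (s / w) * (1 - qi)) / (2 + Complex.I * (s / w) * (1 - q))) * (e * q * q) -
        P * e) * (Complex.I * (hh / w) * s) =
    (P * ((2 + Complex.I * (s / w) * (1 - qi)) / (2 + Complex.I * (s / w) * (1 - q))) * (e * q) -
        P * (e * q)) * (2 * hh + Complex.I * (hh / w) * s) := by
  have hd : (2 + Complex.I * (s / w) * (1 - q)) * (2 + Complex.I * (s / w) * (1 - q))⁻¹ = 1 :=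
    mul_inv_cancel₀ hD
  rw [div_eq_mul_inv]
  linear_combination
    (P * e * hh * (Complex.I * (s / w) - q * (2 + Complex.I * (s / w)))) * hd +
    ((2 + Complex.I * (s / w) * (1 - q))⁻¹ * P * e * hh * (Complex.I * (s / w)) *
      (2 + Complex.I * (s / w) * (1 - q))) * hqi


/-- existence of the discrete holomorphic extension of a mode
`w_j = e^{i j ξ h}` solving `L_p w = -λ w`. -/
theorem stmt5 (p : ℕ) (hp : 1 ≤ p) (h : ℝ) (hh : 0 < h)
    (a : ℤ → ℝ) (hsym : ∀ r : ℤ, a (-r) = a r)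
    (ω : ℝ) (hω : ω ≠ 0)
    (σ : ℤ → ℝ) (hσ : ∀ j : ℤ, 0 ≤ σ j) (hσneg : ∀ j : ℤ, j < 0 → σ j = 0)
    (lam : ℝ) (hlam : 0 < lam) (ξ : ℂ)
    (hξ1 : -(Real.pi / h) < ξ.re) (hξ2 : ξ.re ≤ Real.pi / h)
    (hmode : ∀ j : ℤ, (∑ r ∈ Finset.Icc (-(p : ℤ)) (p : ℤ),
        (a r : ℂ) * Complex.exp (Complex.I * ((j + r : ℤ) : ℂ) * ξ * (h : ℂ))) =
        -(lam : ℂ) * Complex.exp (Complex.I * (j : ℂ) * ξ * (h : ℂ)))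
    (hden : ∀ m : ℤ, 0 ≤ m →
        2 + Complex.I * ((σ m : ℂ) / (ω : ℂ)) * (1 - Complex.exp (Complex.I * ξ * (h : ℂ))) ≠ 0) :
    DiscreteHolo h ω σ (Wext h ω σ ξ) ∧
    (∀ j : ℤ, Wext h ω σ ξ j 0 = Complex.exp (Complex.I * (j : ℂ) * ξ * (h : ℂ))) ∧
    (∀ k j : ℤ, (∑ r ∈ Finset.Icc (-(p : ℤ)) (p : ℤ), (a r : ℂ) * Wext h ω σ ξ (j + r) k) =
        -(lam : ℂ) * Wext h ω σ ξ j k) := by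
  have hωc : (ω : ℂ) ≠ 0 := Complex.ofReal_ne_zero.mpr hω
  refine ⟨?_, ?_, ?_⟩
  · -- discrete holomorphicity
    intro j k
    by_cases hk : 0 ≤ k
    · lift k to ℕ using hk
      have htn : ((k : ℤ) + 1).toNat = k + 1 := by
        rw [show ((k : ℤ) + 1) = ((k + 1 : ℕ) : ℤ) by push_cast; ring, Int.toNat_natCast]
      have htn' : ((k : ℤ)).toNat = k := Int.toNat_natCast k
      set q := Complex.exp (Complex.I * ξ * (h : ℂ)) with hq
      have hq0 : q ≠ 0 := Complex.exp_ne_zero _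
      have hqqi : q * Complex.exp (-(Complex.I * ξ * (h : ℂ))) = 1 := by
        rw [hq, ← Complex.exp_add, add_neg_cancel, Complex.exp_zero]
      set e := Complex.exp (Complex.I * ((j + k : ℤ) : ℂ) * ξ * (h : ℂ)) with he
      have he1 : Complex.exp (Complex.I * ((j + ((k:ℤ) + 1) : ℤ) : ℂ) * ξ * (h : ℂ)) = e * q := by
        rw [he, hq, ← Complex.exp_add]; congr 1; push_cast; ring
      have he1' : Complex.exp (Complex.I * (((j+1) + (k:ℤ) : ℤ) : ℂ) * ξ * (h : ℂ)) = e * q := by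
        rw [he, hq, ← Complex.exp_add]; congr 1; push_cast; ring
      have he2 : Complex.exp (Complex.I * (((j+1) + ((k:ℤ) + 1) : ℤ) : ℂ) * ξ * (h : ℂ)) = e * q * q := by
        rw [he, hq, ← Complex.exp_add, ← Complex.exp_add]; congr 1; push_cast; ring
      set P := ∏ m ∈ Finset.range k, rho (σ m) ξ ω h with hP
      have hZ1 : Zmap h ω σ j ((k:ℤ) + 1) - Zmap h ω σ (j + 1) (k:ℤ)
          = Complex.I * ((h:ℂ) / (ω:ℂ)) * (σ k : ℂ) := by
        unfold Zmap
        rw [htn, htn', Finset.sum_range_succ]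
        push_cast
        ring
      have hZ2 : Zmap h ω σ (j + 1) ((k:ℤ) + 1) - Zmap h ω σ j (k:ℤ)
          = 2 * (h:ℂ) + Complex.I * ((h:ℂ) / (ω:ℂ)) * (σ k : ℂ) := by
        unfold Zmap
        rw [htn, htn', Finset.sum_range_succ]
        push_cast
        ring
      rw [Wext_eq, Wext_eq, Wext_eq, Wext_eq, hZ1, hZ2, htn, htn',
        Finset.prod_range_succ, he1, he1', he2]
      have hD := hden k (Int.natCast_nonneg k)
      rw [rho, ← hP]
      exact cr_alg (ω : ℂ) (h : ℂ) ((σ (k : ℤ) : ℝ) : ℂ) q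
        (Complex.exp (-(Complex.I * ξ * (h : ℂ)))) P e hωc hqqi hD
    · -- k < 0
      push_neg at hk
      have h1 : ((k : ℤ) + 1).toNat = 0 := Int.toNat_of_nonpos (by omega)
      have h0 : (k : ℤ).toNat = 0 := Int.toNat_of_nonpos (by omega)
      have hσk : σ k = 0 := hσneg k hk
      have hZ1 : Zmap h ω σ j (k + 1) - Zmap h ω σ (j + 1) k = 0 := by
        unfold Zmap
        rw [h1, h0]
        simp
        push_cast
        ring
      have hW : Wext h ω σ ξ j (k + 1) - Wext h ω σ ξ (j + 1) k = 0 := by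
        rw [Wext_eq, Wext_eq, h1, h0]
        simp
        congr 2
        push_cast
        ring
      rw [hZ1, hW]
      ring
  · -- boundary value
    intro j
    rw [Wext_eq]
    simp
  · -- mode equation per column
    intro k j
    rw [Wext_eq]
    calc ∑ r ∈ Finset.Icc (-(p : ℤ)) (p : ℤ), (a r : ℂ) * Wext h ω σ ξ (j + r) k
        = (∏ m ∈ Finset.range k.toNat, rho (σ m) ξ ω h) *
          ∑ r ∈ Finset.Icc (-(p : ℤ)) (p : ℤ), (a r : ℂ) *
            Complex.exp (Complex.I * (((j + k) + r : ℤ) : ℂ) * ξ * (h : ℂ)) := by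
          rw [Finset.mul_sum]
          refine Finset.sum_congr rfl fun r _ => ?_
          rw [Wext_eq, show (j + r) + k = (j + k) + r by ring]
          ring
      _ = (∏ m ∈ Finset.range k.toNat, rho (σ m) ξ ω h) *
            (-(lam : ℂ) * Complex.exp (Complex.I * ((j + k : ℤ) : ℂ) * ξ * (h : ℂ))) := by
          rw [hmode (j + k)]
      _ = -(lam : ℂ) * ((∏ m ∈ Finset.range k.toNat, rho (σ m) ξ ω h) *
            Complex.exp (Complex.I * ((j + k : ℤ) : ℂ) * ξ * (h : ℂ))) := by ring
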